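/- Let M be a positively ordered semigroup. If M is nearly separative, then x + 2z ≤ y + 2z implies x + z ≤ y + z for all x, y, z ∈ M. -/

import Mathlib

def idealGen {M : Type*} [AddCommMonoid M] [PartialOrder M] (x : M) : Set M :=
  {z : M | ∃ n : ℕ, z ≤ n • x}

/-- `M` is preminimal: `x + v ≤ y + v` and `v ≤ w` imply `x + w ≤ y + w`. -/
def Preminimal (M : Type*) [AddCommMonoid M] [PartialOrder M] : Prop :=
  ∀ x y v w : M, x + v ≤ y + v → v ≤ w → x + w ≤ y + w

/-- `M` is nearly separative: preminimal and `2x ≤ x + y ≤ 2y` implies `x ≤ y`. -/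
def NearlySeparative (M : Type*) [AddCommMonoid M] [PartialOrder M] : Prop :=
  Preminimal M ∧ ∀ x y : M, 2 • x ≤ x + y → x + y ≤ 2 • y → x ≤ y

theorem stmt_2 {M : Type*} [AddCommMonoid M] [PartialOrder M]
    [CovariantClass M M (· + ·) (· ≤ ·)]
    (hpos : ∀ x : M, 0 ≤ x) (hns : NearlySeparative M)
    (x y z : M) (h : x + 2 • z ≤ y + 2 • z) :
    x + z ≤ y + z := by
  apply hns.2 (x + z) (y + z)
  · have h1 : x + (x + 2 • z) ≤ x + (y + 2 • z) := add_le_add_right h x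
    calc 2 • (x + z) = x + (x + 2 • z) := by abel
      _ ≤ x + (y + 2 • z) := h1
      _ = (x + z) + (y + z) := by abel
  · have h2 : y + (x + 2 • z) ≤ y + (y + 2 • z) := add_le_add_right h y
    calc (x + z) + (y + z) = y + (x + 2 • z) := by abel
      _ ≤ y + (y + 2 • z) := h2
      _ = 2 • (y + z) := by abel
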